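/- Let N ≥ 2 be an integer and let f_N(ω) := (1/N)·(√(ω(N−1)) + √(1−ω))². Let Λ be a finite index set, q : Λ → ℝ≥0 with Σ_λ q_λ = 1, and let p, ωv : Λ → ℝ with ωv_λ ∈ [0,1] and p_λ ≤ f_N(ωv_λ) for every λ. Then Σ_λ q_λ · p_λ ≤ f_N(Σ_λ q_λ · ωv_λ). In other words, any success probability obtained by a shared-randomness mixture of energy-restricted pure-state strategies, with average energy ω = Σ_λ q_λ ωv_λ, is also achievable (is bounded by the same curve) by a single strategy at energy ω: the set of energy-restricted state-discrimination success probabilities is closed under shared randomness. -/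

import Mathlib

open Finset

/-- `f_N(ω) = (1/N)(√(ω(N−1)) + √(1−ω))²`, the maximal probability of discriminating
one of `N` equiprobable pure states with energy bound `ω`. -/
noncomputable def fsd (N : ℕ) (ω : ℝ) : ℝ :=
  (1 / (N : ℝ)) * (Real.sqrt (ω * ((N : ℝ) - 1)) + Real.sqrt (1 - ω)) ^ 2

/-- Affine-plus-concave reformulation of `fsd` on `[0,1]`. -/
noncomputable def gsd (N : ℕ) (ω : ℝ) : ℝ :=
  (1 / (N : ℝ)) * (1 + ((N : ℝ) - 2) * ω) +
    (2 * Real.sqrt ((N : ℝ) - 1) / N) * Real.sqrt (ω - ω ^ 2)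

lemma fsd_eq_gsd (N : ℕ) (hN : 2 ≤ N) {ω : ℝ} (hω : ω ∈ Set.Icc (0 : ℝ) 1) :
    fsd N ω = gsd N ω := by
  obtain ⟨h0, h1⟩ := hω
  have hN1 : (1 : ℝ) ≤ (N : ℝ) := by exact_mod_cast Nat.one_le_of_lt hN
  have hωN : 0 ≤ ω * ((N : ℝ) - 1) := mul_nonneg h0 (by linarith)
  have h1ω : 0 ≤ 1 - ω := by linarith
  have hsq1 : Real.sqrt (ω * ((N : ℝ) - 1)) ^ 2 = ω * ((N : ℝ) - 1) :=
    Real.sq_sqrt hωN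
  have hsq2 : Real.sqrt (1 - ω) ^ 2 = 1 - ω := Real.sq_sqrt h1ω
  have hprod : Real.sqrt (ω * ((N : ℝ) - 1)) * Real.sqrt (1 - ω)
      = Real.sqrt ((N : ℝ) - 1) * Real.sqrt (ω - ω ^ 2) := by
    rw [← Real.sqrt_mul hωN, ← Real.sqrt_mul (by linarith : (0:ℝ) ≤ (N : ℝ) - 1)]
    ring_nf
  unfold fsd gsd
  rw [add_sq, hsq1, hsq2, mul_assoc 2, hprod]
  ring

lemma quad_nonneg {ω : ℝ} (h0 : 0 ≤ ω) (h1 : ω ≤ 1) : 0 ≤ ω - ω ^ 2 := by nlinarith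

lemma gsd_concave (N : ℕ) (hN : 2 ≤ N) :
    ConcaveOn ℝ (Set.Icc (0 : ℝ) 1) (gsd N) := by
  have hN2 : (2 : ℝ) ≤ (N : ℝ) := by exact_mod_cast hN
  have hquad : ConcaveOn ℝ (Set.Icc (0 : ℝ) 1) (fun ω : ℝ => ω - ω ^ 2) := by
    have h2 : ConvexOn ℝ (Set.Icc (0 : ℝ) 1) (fun ω : ℝ => ω ^ 2) :=
      (Even.convexOn_pow (by norm_num)).subset (Set.subset_univ _) (convex_Icc _ _)
    exact (concaveOn_id (convex_Icc (0:ℝ) 1)).sub h2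
  have hsqrt : ConcaveOn ℝ (Set.Icc (0 : ℝ) 1)
      (fun ω : ℝ => Real.sqrt (ω - ω ^ 2)) := by
    refine ⟨convex_Icc _ _, ?_⟩
    intro x hx y hy a b ha hb hab
    have hxm : (0:ℝ) ≤ x - x ^ 2 := quad_nonneg hx.1 hx.2
    have hym : (0:ℝ) ≤ y - y ^ 2 := quad_nonneg hy.1 hy.2
    calc a • Real.sqrt (x - x ^ 2) + b • Real.sqrt (y - y ^ 2)
        ≤ Real.sqrt (a • (x - x ^ 2) + b • (y - y ^ 2)) :=
          Real.strictConcaveOn_sqrt.concaveOn.2 hxm hym ha hb hab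
      _ ≤ Real.sqrt ((a • x + b • y) - (a • x + b • y) ^ 2) :=
          Real.sqrt_le_sqrt (hquad.2 hx hy ha hb hab)
  have haff : ConcaveOn ℝ (Set.Icc (0 : ℝ) 1)
      (fun ω => (1 / (N : ℝ)) * (1 + ((N : ℝ) - 2) * ω)) := by
    have := ((concaveOn_id (convex_Icc (0:ℝ) 1)).smul
      (c := (1 / (N : ℝ)) * ((N : ℝ) - 2))
      (mul_nonneg (by positivity) (by linarith))).add (concaveOn_const (1 / (N : ℝ)) (convex_Icc (0:ℝ) 1))
    convert this using 2 with ω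
    · rfl
    · rfl
    · rfl
    simp only [smul_eq_mul, id, Pi.add_apply]
    ring
  have hc : (0:ℝ) ≤ 2 * Real.sqrt ((N : ℝ) - 1) / N := by positivity
  exact haff.add (hsqrt.smul hc)

theorem success_probabilities_closed_under_shared_randomness
    (N : ℕ) (hN : 2 ≤ N)
    (Λ : Type) [Fintype Λ] (q : Λ → ℝ) (hq : ∀ l, 0 ≤ q l) (hq1 : ∑ l, q l = 1)
    (p ωv : Λ → ℝ) (hωv : ∀ l, ωv l ∈ Set.Icc (0 : ℝ) 1)
    (hp : ∀ l, p l ≤ fsd N (ωv l)) :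
    ∑ l, q l * p l ≤ fsd N (∑ l, q l * ωv l) := by
  have hmean : (∑ l, q l * ωv l) ∈ Set.Icc (0 : ℝ) 1 := by
    constructor
    · exact Finset.sum_nonneg fun l _ => mul_nonneg (hq l) (hωv l).1
    · calc ∑ l, q l * ωv l ≤ ∑ l, q l := by
            exact Finset.sum_le_sum fun l _ =>
              (mul_le_of_le_one_right (hq l) (hωv l).2)
        _ = 1 := hq1
  have hjensen : ∑ l, q l • gsd N (ωv l) ≤ gsd N (∑ l, q l • ωv l) :=
    (gsd_concave N hN).le_map_sum (fun l _ => hq l) hq1 (fun l _ => hωv l)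
  calc ∑ l, q l * p l
      ≤ ∑ l, q l * fsd N (ωv l) :=
        Finset.sum_le_sum fun l _ => mul_le_mul_of_nonneg_left (hp l) (hq l)
    _ = ∑ l, q l • gsd N (ωv l) := by
        refine Finset.sum_congr rfl fun l _ => ?_
        rw [smul_eq_mul, fsd_eq_gsd N hN (hωv l)]
    _ ≤ gsd N (∑ l, q l • ωv l) := hjensen
    _ = fsd N (∑ l, q l * ωv l) := by
        simp only [smul_eq_mul]
        exact (fsd_eq_gsd N hN hmean).symm
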